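/- Let u₁,…,uₙ and v₁,…,vₙ be real numbers, and let F_u, F_v denote their empirical distribution functions: F_u(t) = (1/n)·#{i : uᵢ ≤ t}. Then for every τ > 0, sup over t of |F_u(t) − F_v(t)| ≤ (1/n)·#{i : |uᵢ − vᵢ| > τ} + sup over t of (F_u(t+τ) − F_u(t−τ)). -/
import Mathlib


open Finset

/-- Kolmogorov distance between two empirical CDFs is bounded by the
fraction of far pairs plus the maximal empirical mass of a 2τ window. -/
theorem empirical_cdf_comparison
    (n : ℕ) (hn : 1 ≤ n) (u v : Fin n → ℝ) (τ : ℝ) (hτ : 0 < τ) :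
    (⨆ t : ℝ, |((Finset.univ.filter (fun i => u i ≤ t)).card : ℝ) / n
        - ((Finset.univ.filter (fun i => v i ≤ t)).card : ℝ) / n|)
      ≤ ((Finset.univ.filter (fun i => τ < |u i - v i|)).card : ℝ) / n
        + ⨆ t : ℝ, (((Finset.univ.filter (fun i => u i ≤ t + τ)).card : ℝ) / n
            - ((Finset.univ.filter (fun i => u i ≤ t - τ)).card : ℝ) / n) := by
  have hn' : (0 : ℝ) < n := by exact_mod_cast hn
  set far : ℝ := ((Finset.univ.filter (fun i => τ < |u i - v i|)).card : ℝ) / n with hfar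
  set W : ℝ → ℝ := fun t =>
    (((Finset.univ.filter (fun i : Fin n => u i ≤ t + τ)).card : ℝ) / n
      - ((Finset.univ.filter (fun i : Fin n => u i ≤ t - τ)).card : ℝ) / n) with hW
  have hWbdd : BddAbove (Set.range W) := by
    refine ⟨1, ?_⟩
    rintro x ⟨t, rfl⟩
    have h1 : (((Finset.univ.filter (fun i : Fin n => u i ≤ t + τ)).card : ℝ)) ≤ n := by
      have : (Finset.univ.filter (fun i : Fin n => u i ≤ t + τ)).card ≤ (Finset.univ : Finset (Fin n)).card := Finset.card_filter_le _ _
      simpa using (Nat.cast_le.mpr this : _ ≤ ((Finset.univ : Finset (Fin n)).card : ℝ))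
    have h2 : (0 : ℝ) ≤ ((Finset.univ.filter (fun i : Fin n => u i ≤ t - τ)).card : ℝ) := by
      positivity
    simp only [W]
    have : (((Finset.univ.filter (fun i : Fin n => u i ≤ t + τ)).card : ℝ)) / n ≤ 1 := by
      rw [div_le_one hn']; exact h1
    linarith [div_nonneg h2 hn'.le]
  refine ciSup_le fun t => ?_
  have key : |((Finset.univ.filter (fun i => u i ≤ t)).card : ℝ) / n
        - ((Finset.univ.filter (fun i => v i ≤ t)).card : ℝ) / n| ≤ far + W t := by
    -- subset facts
    have sub1 : (Finset.univ.filter (fun i : Fin n => v i ≤ t)) ⊆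
        (Finset.univ.filter (fun i : Fin n => τ < |u i - v i|)) ∪
        (Finset.univ.filter (fun i : Fin n => u i ≤ t + τ)) := by
      intro i hi
      simp only [Finset.mem_filter, Finset.mem_union, Finset.mem_univ, true_and] at *
      by_cases h : τ < |u i - v i|
      · exact Or.inl h
      · right
        push_neg at h
        have := abs_le.mp h
        linarith [this.1, this.2]
    have sub2 : (Finset.univ.filter (fun i : Fin n => u i ≤ t - τ)) ⊆
        (Finset.univ.filter (fun i : Fin n => τ < |u i - v i|)) ∪
        (Finset.univ.filter (fun i : Fin n => v i ≤ t)) := by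
      intro i hi
      simp only [Finset.mem_filter, Finset.mem_union, Finset.mem_univ, true_and] at *
      by_cases h : τ < |u i - v i|
      · exact Or.inl h
      · right
        push_neg at h
        have := abs_le.mp h
        linarith [this.1, this.2]
    have sub3 : (Finset.univ.filter (fun i : Fin n => u i ≤ t - τ)) ⊆
        (Finset.univ.filter (fun i : Fin n => u i ≤ t)) := by
      intro i hi
      simp only [Finset.mem_filter, Finset.mem_univ, true_and] at *
      linarith
    have sub4 : (Finset.univ.filter (fun i : Fin n => u i ≤ t)) ⊆
        (Finset.univ.filter (fun i : Fin n => u i ≤ t + τ)) := by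
      intro i hi
      simp only [Finset.mem_filter, Finset.mem_univ, true_and] at *
      linarith
    have c1 : ((Finset.univ.filter (fun i : Fin n => v i ≤ t)).card : ℝ) ≤
        ((Finset.univ.filter (fun i : Fin n => τ < |u i - v i|)).card : ℝ) +
        ((Finset.univ.filter (fun i : Fin n => u i ≤ t + τ)).card : ℝ) := by
      have := (Finset.card_le_card sub1).trans (Finset.card_union_le _ _)
      exact_mod_cast this
    have c2 : ((Finset.univ.filter (fun i : Fin n => u i ≤ t - τ)).card : ℝ) ≤
        ((Finset.univ.filter (fun i : Fin n => τ < |u i - v i|)).card : ℝ) +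
        ((Finset.univ.filter (fun i : Fin n => v i ≤ t)).card : ℝ) := by
      have := (Finset.card_le_card sub2).trans (Finset.card_union_le _ _)
      exact_mod_cast this
    have c3 : ((Finset.univ.filter (fun i : Fin n => u i ≤ t - τ)).card : ℝ) ≤
        ((Finset.univ.filter (fun i : Fin n => u i ≤ t)).card : ℝ) := by
      exact_mod_cast Finset.card_le_card sub3
    have c4 : ((Finset.univ.filter (fun i : Fin n => u i ≤ t)).card : ℝ) ≤
        ((Finset.univ.filter (fun i : Fin n => u i ≤ t + τ)).card : ℝ) := by
      exact_mod_cast Finset.card_le_card sub4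
    have expand : far + W t =
        (((Finset.univ.filter (fun i : Fin n => τ < |u i - v i|)).card : ℝ)
          + ((Finset.univ.filter (fun i : Fin n => u i ≤ t + τ)).card : ℝ)
          - ((Finset.univ.filter (fun i : Fin n => u i ≤ t - τ)).card : ℝ)) / n := by
      simp only [hfar, hW]; ring
    rw [div_sub_div_same, expand, abs_div, abs_of_pos hn']
    gcongr ?_ / _
    rw [abs_le]
    constructor <;> linarith
  calc _ ≤ far + W t := key
    _ ≤ far + ⨆ t, W t := by
        gcongr
        exact le_ciSup hWbdd t
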